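/- Let J be the 2×2 Jacobian sub-matrix of the Adam (ω,λ) dynamics at the nontrivial fixed point, with det(J) = β₁ β₂^{-k/(2(k-2))} and 1 - tr(J) + det(J) = (2-k)(1 - β₂^{1/(2(k-2))})(β₁β₂^{-k/(2(k-2))} - β₂^{-1/(2(k-2))}). Then the spectral radius r(J) < 1 if and only if both β₁ < β₂^{k/(2(k-2))} and β₁ > ((k-2)β₂^{-1/(2(k-2))} - k) / ((k - (k-2)β₂^{1/(2(k-2))}) β₂^{-k/(2(k-2))}). -/

import Mathlib

lemma jury_real (x₁ y₁ x₂ y₂ t d : ℝ)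
    (h1 : x₁ + x₂ = t) (h2 : y₁ + y₂ = 0)
    (h3 : x₁*x₂ - y₁*y₂ = d) (h4 : x₁*y₂ + x₂*y₁ = 0) :
    (x₁^2+y₁^2 < 1 ∧ x₂^2+y₂^2 < 1) ↔ (-1 < d ∧ d < 1 ∧ 0 < 1 - t + d ∧ 0 < 1 + t + d) := by
  have hy : y₂ = -y₁ := by linarith
  subst hy
  have hcase : y₁ = 0 ∨ x₂ = x₁ := by
    rcases mul_eq_zero.mp (show y₁ * (x₂ - x₁) = 0 by linarith [h4]) with h | h
    · exact Or.inl h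
    · exact Or.inr (by linarith)
  constructor
  · rintro ⟨hA, hB⟩
    refine ⟨by nlinarith [sq_nonneg (x₁*x₂ + y₁*y₁ + 1), sq_nonneg (x₁ - x₂), sq_nonneg (x₁+x₂)],
      by nlinarith [sq_nonneg (x₁*x₂ + y₁*y₁ - 1), sq_nonneg (x₁ - x₂), sq_nonneg (x₁+x₂)], ?_, ?_⟩
    · rcases hcase with h | h
      · subst h; nlinarith [sq_nonneg (1-x₁), sq_nonneg (1-x₂)]
      · subst h; nlinarith [sq_nonneg (1-x₂), sq_nonneg y₁]
    · rcases hcase with h | h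
      · subst h; nlinarith [sq_nonneg (1+x₁), sq_nonneg (1+x₂)]
      · subst h; nlinarith [sq_nonneg (1+x₂), sq_nonneg y₁]
  · rintro ⟨hd1, hd2, hp1, hp2⟩
    rcases hcase with h | h
    · subst h
      simp only [neg_zero, mul_zero, sub_zero] at *
      have hprod : (1 - x₁^2) * (1 - x₂^2) > 0 := by nlinarith [mul_pos hp1 hp2]
      have key : ∀ a b : ℝ, a * b = d → (1 - a^2) * (1 - b^2) > 0 → a^2 < 1 := by
        intro a b hab hpr
        by_contra hc
        push_neg at hc
        have hb : 1 < b^2 := by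
          by_contra h
          push_neg at h
          nlinarith [mul_nonneg (by linarith : (0:ℝ) ≤ a^2 - 1) (by linarith : (0:ℝ) ≤ 1 - b^2)]
        have : 1 < a^2 * b^2 := by nlinarith
        nlinarith [this, hd1, hd2, hab]
      constructor
      · simpa using key x₁ x₂ h3 hprod
      · simpa using key x₂ x₁ (by linear_combination h3) (by nlinarith [hprod])
    · subst h
      have : x₂^2 + y₁^2 = d := by nlinarith [h3]
      constructor <;> nlinarith

lemma spec_iff (M : Matrix (Fin 2) (Fin 2) ℂ) (μ : ℂ) :
    μ ∈ spectrum ℂ M ↔ μ^2 - M.trace * μ + M.det = 0 := by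
  rw [spectrum.mem_iff, Matrix.isUnit_iff_isUnit_det, isUnit_iff_ne_zero, not_ne_iff,
    Matrix.det_fin_two, Matrix.det_fin_two, Matrix.trace_fin_two]
  simp [Matrix.algebraMap_matrix_apply, Matrix.sub_apply]
  constructor <;> intro h <;> [linear_combination h; linear_combination h]

/-- Jury criterion for a real 2×2 matrix. -/
lemma jury_matrix (J : Matrix (Fin 2) (Fin 2) ℝ) :
    (∀ μ ∈ spectrum ℂ (J.map (fun a : ℝ => (a : ℂ))), ‖μ‖ < 1) ↔
      (-1 < J.det ∧ J.det < 1 ∧ 0 < 1 - J.trace + J.det ∧ 0 < 1 + J.trace + J.det) := by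
  set t := J.trace with ht
  set d := J.det with hd
  set Jc := J.map (fun a : ℝ => (a : ℂ)) with hJc
  have htrc : Jc.trace = (t : ℂ) := by
    simp [hJc, Matrix.trace_fin_two, Matrix.map_apply, ht, Matrix.trace_fin_two]
  have hdetc : Jc.det = (d : ℂ) := by
    simp [hJc, Matrix.det_fin_two, Matrix.map_apply, hd, Matrix.det_fin_two]
  obtain ⟨s, hs⟩ := IsAlgClosed.exists_pow_nat_eq ((t:ℂ)^2 - 4*(d:ℂ)) (n := 2) (by norm_num)
  set μ₁ : ℂ := ((t:ℂ) + s)/2 with hμ₁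
  set μ₂ : ℂ := ((t:ℂ) - s)/2 with hμ₂
  have hsum : μ₁ + μ₂ = (t:ℂ) := by rw [hμ₁, hμ₂]; ring
  have hprod : μ₁ * μ₂ = (d:ℂ) := by
    rw [hμ₁, hμ₂]
    field_simp
    linear_combination -hs
  have hfact : ∀ z : ℂ, z^2 - (t:ℂ)*z + (d:ℂ) = (z - μ₁)*(z - μ₂) := fun z => by
    linear_combination z*hsum - hprod
  have hmem : ∀ μ : ℂ, μ ∈ spectrum ℂ Jc ↔ (μ = μ₁ ∨ μ = μ₂) := by
    intro μ
    rw [spec_iff, htrc, hdetc, hfact μ, mul_eq_zero, sub_eq_zero, sub_eq_zero]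
  have hnorm : ∀ μ : ℂ, ‖μ‖ < 1 ↔ μ.re^2 + μ.im^2 < 1 := by
    intro μ
    rw [show μ.re^2 + μ.im^2 = ‖μ‖^2 by
      rw [Complex.sq_norm, Complex.normSq_apply]; ring]
    rw [sq_lt_one_iff_abs_lt_one, abs_norm]
  have hre : μ₁.re + μ₂.re = t ∧ μ₁.im + μ₂.im = 0 := by
    constructor
    · have := congrArg Complex.re hsum; simpa using this
    · have := congrArg Complex.im hsum; simpa using this
  have hpr : μ₁.re*μ₂.re - μ₁.im*μ₂.im = d ∧ μ₁.re*μ₂.im + μ₂.re*μ₁.im = 0 := by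
    constructor
    · have := congrArg Complex.re hprod; simpa [Complex.mul_re] using this
    · have := congrArg Complex.im hprod
      simp [Complex.mul_im] at this
      linarith
  have key := jury_real μ₁.re μ₁.im μ₂.re μ₂.im t d hre.1 hre.2 hpr.1 hpr.2
  rw [← key]
  constructor
  · intro h
    exact ⟨(hnorm μ₁).mp (h μ₁ ((hmem μ₁).mpr (Or.inl rfl))),
           (hnorm μ₂).mp (h μ₂ ((hmem μ₂).mpr (Or.inr rfl)))⟩
  · rintro ⟨h1, h2⟩ μ hμ
    rcases (hmem μ).mp hμ with rfl | rfl
    · exact (hnorm _).mpr h1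
    · exact (hnorm _).mpr h2

theorem stmt_16 (k : ℕ) (hk : 4 ≤ k) (hke : Even k) (β₁ β₂ : ℝ)
    (hβ₁ : 0 ≤ β₁) (hβ₁1 : β₁ < 1) (hβ₂ : 0 < β₂) (hβ₂1 : β₂ < 1)
    (J : Matrix (Fin 2) (Fin 2) ℝ)
    (hdet : J.det = β₁ * β₂ ^ (-((k : ℝ) / (2 * ((k : ℝ) - 2)))))
    (htr : 1 - J.trace + J.det =
      (2 - (k : ℝ)) * (1 - β₂ ^ ((1 : ℝ) / (2 * ((k : ℝ) - 2)))) *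
        (β₁ * β₂ ^ (-((k : ℝ) / (2 * ((k : ℝ) - 2)))) -
          β₂ ^ (-((1 : ℝ) / (2 * ((k : ℝ) - 2)))))) :
    ((∀ μ ∈ spectrum ℂ (J.map (fun a : ℝ => (a : ℂ))), ‖μ‖ < 1) ↔
      (β₁ < β₂ ^ ((k : ℝ) / (2 * ((k : ℝ) - 2))) ∧
       (((k : ℝ) - 2) * β₂ ^ (-((1 : ℝ) / (2 * ((k : ℝ) - 2)))) - (k : ℝ)) /
           (((k : ℝ) - ((k : ℝ) - 2) * β₂ ^ ((1 : ℝ) / (2 * ((k : ℝ) - 2)))) *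
             β₂ ^ (-((k : ℝ) / (2 * ((k : ℝ) - 2))))) < β₁)) := by
  rw [jury_matrix]
  have hk4 : (4:ℝ) ≤ (k:ℝ) := by exact_mod_cast hk
  have hc : (0:ℝ) < 2*((k:ℝ)-2) := by linarith
  have he1 : (0:ℝ) < (1:ℝ)/(2*((k:ℝ)-2)) := by positivity
  have hek : (0:ℝ) < (k:ℝ)/(2*((k:ℝ)-2)) := by
    apply div_pos (by linarith) hc
  have hnp : β₂ ^ (-((1:ℝ)/(2*((k:ℝ)-2)))) = (β₂ ^ ((1:ℝ)/(2*((k:ℝ)-2))))⁻¹ :=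
    Real.rpow_neg hβ₂.le _
  have hnq : β₂ ^ (-((k:ℝ)/(2*((k:ℝ)-2)))) = (β₂ ^ ((k:ℝ)/(2*((k:ℝ)-2))))⁻¹ :=
    Real.rpow_neg hβ₂.le _
  rw [hnq] at hdet
  rw [hnp, hnq] at htr
  rw [hnp, hnq]
  set p := β₂ ^ ((1:ℝ)/(2*((k:ℝ)-2))) with hpdef
  set q := β₂ ^ ((k:ℝ)/(2*((k:ℝ)-2))) with hqdef
  have hp0 : 0 < p := Real.rpow_pos_of_pos hβ₂ _
  have hp1 : p < 1 := Real.rpow_lt_one hβ₂.le hβ₂1 he1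
  have hq0 : 0 < q := Real.rpow_pos_of_pos hβ₂ _
  set t := J.trace with ht
  set d := J.det with hdd
  set P := p⁻¹ with hPdef
  set Q := q⁻¹ with hQdef
  have hP : p * P = 1 := mul_inv_cancel₀ hp0.ne'
  have hQ : q * Q = 1 := mul_inv_cancel₀ hq0.ne'
  have hP0 : 0 < P := by rw [hPdef]; positivity
  have hQ0 : 0 < Q := by rw [hQdef]; positivity
  have hP1 : 1 < P := by nlinarith [mul_pos hP0 (show (0:ℝ) < 1 - p by linarith)]
  have hd0 : 0 ≤ d := hdet ▸ mul_nonneg hβ₁ hQ0.le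
  -- condition 1 equivalence
  have c1 : d < 1 ↔ β₁ < q := by
    rw [hdet, hQdef, ← div_eq_mul_inv, div_lt_one hq0]
  -- denominator positivity for condition 2
  have hden : (0:ℝ) < ((k:ℝ) - ((k:ℝ)-2)*p) * Q :=
    mul_pos (by nlinarith) hQ0
  -- condition 2 equivalence
  have e1 : β₁ * (((k:ℝ) - ((k:ℝ)-2)*p) * Q) = d * ((k:ℝ) - ((k:ℝ)-2)*p) := by
    rw [hdet]; ring
  have e2 : 1 + t + d = d*((k:ℝ)-((k:ℝ)-2)*p) + (k:ℝ) - ((k:ℝ)-2)*P := by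
    have ht' : 1 - t + d = (2-(k:ℝ))*(1-p)*(d - P) := by
      rw [htr, ← hdet]
    linear_combination -ht' + ((k:ℝ)-2)*hP
  have c2 : (0 < 1 + t + d) ↔
      (((k:ℝ)-2)*P - (k:ℝ)) / (((k:ℝ) - ((k:ℝ)-2)*p) * Q) < β₁ := by
    rw [div_lt_iff₀ hden, e1, e2]
    constructor <;> intro h <;> linarith
  constructor
  · rintro ⟨_, h1, _, h3⟩
    exact ⟨c1.mp h1, c2.mp h3⟩
  · rintro ⟨h1, h2⟩
    have hd1 : d < 1 := c1.mpr h1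
    refine ⟨by linarith, hd1, ?_, c2.mpr h2⟩
    have ht' : 1 - t + d = (2-(k:ℝ))*(1-p)*(d - P) := by rw [htr, ← hdet]
    rw [ht']
    have hneg : (2-(k:ℝ))*(1-p) < 0 := mul_neg_of_neg_of_pos (by linarith) (by linarith)
    exact mul_pos_of_neg_of_neg hneg (by linarith)
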